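/- arXiv:1209.0345 — 4 statements merged into one kernel-verified Lean document; each statement's English description precedes it below -/
import Mathlib

section
/- Define extended observability matrices for {(A_q, C_q)}_{q=1}^{Q} by O_0 = [C_1; …; C_Q] (stacked) and O_{i+1} = [O_i; O_i A_1; …; O_i A_Q]. Then ker O_{n-1} = ⋂ { ker (C_{q_k} A_{q_{k-1}} ⋯ A_{q_1}) : k ≥ 1, q_1,…,q_k ∈ {1,…,Q} }, where A_q ∈ ℝ^{n×n} and C_q ∈ ℝ^{p×n}. -/
open Matrix

def wordProd {Qn n : ℕ} (A : Fin Qn → Matrix (Fin n) (Fin n) ℝ) :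
    {k : ℕ} → (Fin k → Fin Qn) → Matrix (Fin n) (Fin n) ℝ
  | 0, _ => 1
  | k+1, q => A (q (Fin.last k)) * wordProd A (Fin.init q)

def obsKer {Qn n pd : ℕ} (A : Fin Qn → Matrix (Fin n) (Fin n) ℝ)
    (C : Fin Qn → Matrix (Fin pd) (Fin n) ℝ) : ℕ → Submodule ℝ (Fin n → ℝ)
  | 0 => ⨅ q : Fin Qn, LinearMap.ker (Matrix.mulVecLin (C q))
  | i+1 => obsKer A C i ⊓
      ⨅ q : Fin Qn, Submodule.comap (Matrix.mulVecLin (A q)) (obsKer A C i)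

namespace St12

variable {Qn n pd : ℕ} (A : Fin Qn → Matrix (Fin n) (Fin n) ℝ)
    (C : Fin Qn → Matrix (Fin pd) (Fin n) ℝ)

def F (k : ℕ) : Submodule ℝ (Fin n → ℝ) :=
  ⨅ q : Fin (k+1) → Fin Qn,
    LinearMap.ker (Matrix.mulVecLin (C (q (Fin.last k)) * wordProd A (Fin.init q)))

lemma wordProd_eq_tail : ∀ {k : ℕ} (q : Fin (k+1) → Fin Qn),
    wordProd A q = wordProd A (Fin.tail q) * A (q 0) := by
  intro k
  induction k with
  | zero => intro q; simp [wordProd]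
  | succ k ih =>
    intro q
    have h2 : (Fin.init q) 0 = q 0 := by simp [Fin.init]
    have h3 : q (Fin.last (k+1)) = (Fin.tail q) (Fin.last k) := by
      simp [Fin.tail, Fin.succ_last]
    calc wordProd A q = A (q (Fin.last (k+1))) * wordProd A (Fin.init q) := rfl
    _ = A (q (Fin.last (k+1))) * (wordProd A (Fin.tail (Fin.init q)) * A ((Fin.init q) 0)) := by
        rw [ih]
    _ = wordProd A (Fin.tail q) * A (q 0) := by
        rw [Fin.tail_init_eq_init_tail, h2, h3]; exact (mul_assoc _ _ _).symm

lemma key {k : ℕ} (q : Fin (k+2) → Fin Qn) :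
    C (q (Fin.last (k+1))) * wordProd A (Fin.init q)
      = (C (Fin.tail q (Fin.last k)) * wordProd A (Fin.init (Fin.tail q))) * A (q 0) := by
  have h2 : (Fin.init q) 0 = q 0 := by simp [Fin.init]
  have h3 : q (Fin.last (k+1)) = (Fin.tail q) (Fin.last k) := by
    simp [Fin.tail, Fin.succ_last]
  rw [wordProd_eq_tail A (Fin.init q), Fin.tail_init_eq_init_tail, h2, h3]
  exact (Matrix.mul_assoc _ _ _).symm

lemma mem_F_succ {k : ℕ} {x : Fin n → ℝ} :
    x ∈ F A C (k+1) ↔ ∀ q0 : Fin Qn, (A q0).mulVec x ∈ F A C k := by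
  simp only [F, Submodule.mem_iInf, LinearMap.mem_ker, mulVecLin_apply]
  constructor
  · intro h q0 q
    have := h (Fin.cons q0 q)
    rw [key] at this
    simpa [Fin.tail_cons, Fin.cons_zero, Matrix.mulVec_mulVec] using this
  · intro h q
    rw [key]
    have := h (q 0) (Fin.tail q)
    simpa [Matrix.mulVec_mulVec] using this

lemma mem_obsKer : ∀ (i : ℕ) (x : Fin n → ℝ),
    x ∈ obsKer A C i ↔ ∀ k ≤ i, x ∈ F A C k := by
  intro i
  induction i with
  | zero =>
    intro x
    simp only [obsKer, Submodule.mem_iInf]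
    constructor
    · intro h k hk
      interval_cases k
      simp only [F, Submodule.mem_iInf, LinearMap.mem_ker, mulVecLin_apply]
      intro q
      have := h (q 0)
      simp only [LinearMap.mem_ker, mulVecLin_apply] at this
      have hq : q (Fin.last 0) = q 0 := rfl
      simpa [wordProd, hq] using this
    · intro h q0
      have h0 := h 0 le_rfl
      simp only [F, Submodule.mem_iInf, LinearMap.mem_ker, mulVecLin_apply] at h0
      have := h0 (fun _ => q0)
      simpa [wordProd] using this
  | succ i ih =>
    intro x
    simp only [obsKer, Submodule.mem_inf, Submodule.mem_iInf, Submodule.mem_comap,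
      mulVecLin_apply]
    constructor
    · rintro ⟨h1, h2⟩ k hk
      rcases k with _ | k
      · exact (ih x).1 h1 0 (Nat.zero_le _)
      · have hk' : k ≤ i := Nat.succ_le_succ_iff.mp hk
        rw [mem_F_succ]
        intro q0
        exact (ih _).1 (h2 q0) k hk'
    · intro h
      refine ⟨(ih x).2 (fun k hk => h k (le_trans hk (Nat.le_succ i))), fun q0 => (ih _).2 ?_⟩
      intro k hk
      have := h (k+1) (Nat.succ_le_succ hk)
      rw [mem_F_succ] at this
      exact this q0

lemma obsKer_succ_le (i : ℕ) : obsKer A C (i+1) ≤ obsKer A C i := by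
  show obsKer A C i ⊓ _ ≤ obsKer A C i
  exact inf_le_left

lemma obsKer_stab {j : ℕ} (h : obsKer A C (j+1) = obsKer A C j) :
    ∀ m, j ≤ m → obsKer A C m = obsKer A C j := by
  intro m
  induction m with
  | zero => intro hm; rw [Nat.le_zero.mp hm]
  | succ m ih =>
    intro hm
    rcases Nat.eq_or_lt_of_le hm with h' | h'
    · rw [← h']
    · have hj : j ≤ m := Nat.lt_succ_iff.mp h'
      have hmj := ih hj
      have : obsKer A C (m+1) = obsKer A C (j+1) := by
        show obsKer A C m ⊓ (⨅ q, Submodule.comap (Matrix.mulVecLin (A q)) (obsKer A C m)) =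
          obsKer A C j ⊓ (⨅ q, Submodule.comap (Matrix.mulVecLin (A q)) (obsKer A C j))
        rw [hmj]
      rw [this, h]

lemma exists_stab (hn : 0 < n) : ∃ j, j ≤ n - 1 ∧ obsKer A C (j+1) = obsKer A C j := by
  by_contra hc
  push_neg at hc
  have hlt : ∀ j ≤ n - 1, obsKer A C (j+1) < obsKer A C j := fun j hj =>
    lt_of_le_of_ne (obsKer_succ_le A C j) (hc j hj)
  have h0 : obsKer A C 0 ≠ ⊤ := by
    intro h
    have h1 : obsKer A C 1 = ⊤ := by
      show obsKer A C 0 ⊓ _ = ⊤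
      simp [h]
    exact (hc 0 (Nat.zero_le _)) (h1.trans h.symm)
  have h0' : Module.finrank ℝ (obsKer A C 0) < n := by
    have := Submodule.finrank_lt (K := ℝ) (V := Fin n → ℝ) h0
    simpa using this
  have hchain : ∀ j ≤ n, Module.finrank ℝ (obsKer A C j) + j ≤
      Module.finrank ℝ (obsKer A C 0) := by
    intro j
    induction j with
    | zero => simp
    | succ j ih =>
      intro hj
      have hj' : j ≤ n - 1 := by omega
      have hd := Submodule.finrank_lt_finrank_of_lt (hlt j hj')
      have := ih (by omega)
      omega
  have := hchain n le_rfl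
  omega

end St12

open St12 in
/-- `ker O_{n-1} = ⋂ { ker (C_{q_k} A_{q_{k-1}} ⋯ A_{q_1}) : k ≥ 1 }` (words of length
`k+1 ≥ 1` are encoded as `q : Fin (k+1) → Fin Qn`, the last letter indexing `C`). -/
theorem stmt12 {Qn n pd : ℕ}
    (A : Fin Qn → Matrix (Fin n) (Fin n) ℝ)
    (C : Fin Qn → Matrix (Fin pd) (Fin n) ℝ) :
    obsKer A C (n-1) =
      ⨅ (k : ℕ) (q : Fin (k+1) → Fin Qn),
        LinearMap.ker (Matrix.mulVecLin (C (q (Fin.last k)) * wordProd A (Fin.init q))) := by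
  have hrfl : (⨅ (k : ℕ) (q : Fin (k+1) → Fin Qn),
      LinearMap.ker (Matrix.mulVecLin (C (q (Fin.last k)) * wordProd A (Fin.init q))))
      = ⨅ k, F A C k := rfl
  rw [hrfl]
  rcases Nat.eq_zero_or_pos n with hn | hn
  · subst hn
    ext x
    have hx : x = 0 := funext fun i => i.elim0
    rw [hx]
    exact ⟨fun _ => Submodule.zero_mem _, fun _ => Submodule.zero_mem _⟩
  · obtain ⟨j, hj, hstab⟩ := exists_stab A C hn
    have hkey : ∀ m, n - 1 ≤ m → obsKer A C m = obsKer A C (n-1) := by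
      intro m hm
      rw [obsKer_stab A C hstab m (le_trans hj hm), obsKer_stab A C hstab (n-1) hj]
    apply le_antisymm
    · refine le_iInf fun k => ?_
      have h1 : obsKer A C (n-1) = obsKer A C (max (n-1) k) :=
        (hkey _ (le_max_left _ _)).symm
      rw [h1]
      intro x hx
      exact (mem_obsKer A C _ x).1 hx k (le_max_right _ _)
    · intro x hx
      rw [Submodule.mem_iInf] at hx
      exact (mem_obsKer A C _ x).2 (fun k _ => hx k)
end

section
/- Let {(A_q,B_q,C_q)}_{q=1}^Q define an affine LPV system with scheduling set P ⊆ ℝ^Q whose linear span is ℝ^Q, and state recursion x(t+1) = ∑_q p_q(t)(A_q x(t)+B_q u(t)) from x(0)=0. Then the linear span of all states reachable from 0 using scheduling values in P equals the linear span of all states reachable from 0 using scheduling values in the standard basis {e_1,…,e_Q}; both equal the span of the vectors A_{q_k}⋯A_{q_1}B_{q_0}e for k ≥ 0, q_i ∈ {1,…,Q}, e ∈ ℝ^m. -/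
open Matrix

/-- States reachable from the zero initial state at some time `t ≥ 1`, using inputs `u`
and scheduling signals taking values in `P`. -/
def reachSet {Qn n m : ℕ} (A : Fin Qn → Matrix (Fin n) (Fin n) ℝ)
    (B : Fin Qn → Matrix (Fin n) (Fin m) ℝ) (P : Set (Fin Qn → ℝ)) :
    Set (Fin n → ℝ) :=
  {z | ∃ (t : ℕ), 1 ≤ t ∧ ∃ (u : ℕ → Fin m → ℝ) (p : ℕ → Fin Qn → ℝ)
        (x : ℕ → Fin n → ℝ),
      (∀ s, p s ∈ P) ∧ x 0 = 0 ∧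
      (∀ s, x (s+1) = ∑ q : Fin Qn, p s q • (A q *ᵥ x s + B q *ᵥ u s)) ∧
      z = x t}

section Aux

variable {Qn n m : ℕ} (A : Fin Qn → Matrix (Fin n) (Fin n) ℝ)
    (B : Fin Qn → Matrix (Fin n) (Fin m) ℝ)

/-- The canonical trajectory from 0 for input `u` and scheduling `p`. -/
def traj (u : ℕ → Fin m → ℝ) (p : ℕ → Fin Qn → ℝ) : ℕ → Fin n → ℝ
  | 0 => 0
  | s+1 => ∑ q : Fin Qn, p s q • (A q *ᵥ traj u p s + B q *ᵥ u s)

lemma traj_mem (P : Set (Fin Qn → ℝ)) (u : ℕ → Fin m → ℝ) (p : ℕ → Fin Qn → ℝ)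
    (hp : ∀ s, p s ∈ P) {t : ℕ} (ht : 1 ≤ t) :
    traj A B u p t ∈ reachSet A B P :=
  ⟨t, ht, u, p, traj A B u p, hp, rfl, fun _ => rfl, rfl⟩

def wordSet : Set (Fin n → ℝ) :=
  {z : Fin n → ℝ | ∃ (k : ℕ) (q : Fin (k+1) → Fin Qn) (e : Fin m → ℝ),
    z = wordProd A (fun i : Fin k => q i.succ) *ᵥ (B (q 0) *ᵥ e)}

lemma word_snoc (k : ℕ) (q : Fin (k+1) → Fin Qn) (q' : Fin Qn) (e : Fin m → ℝ) :
    A q' *ᵥ (wordProd A (fun i : Fin k => q i.succ) *ᵥ (B (q 0) *ᵥ e)) =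
      wordProd A (fun i : Fin (k+1) => (Fin.snoc q q' : Fin (k+2) → Fin Qn) i.succ)
        *ᵥ (B ((Fin.snoc q q' : Fin (k+2) → Fin Qn) 0) *ᵥ e) := by
  have h0 : (Fin.snoc q q' : Fin (k+2) → Fin Qn) 0 = q 0 := by
    have := Fin.snoc_castSucc (α := fun _ => Fin Qn) (x := q') (p := q) (i := 0)
    simpa using this
  have hm : wordProd A (fun i : Fin (k+1) => (Fin.snoc q q' : Fin (k+2) → Fin Qn) i.succ)
      = A q' * wordProd A (fun i : Fin k => q i.succ) := by
    have hinit : (Fin.init fun i : Fin (k+1) =>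
        (Fin.snoc q q' : Fin (k+2) → Fin Qn) i.succ) = fun i : Fin k => q i.succ := by
      funext i
      show (Fin.snoc q q' : Fin (k+2) → Fin Qn) (Fin.castSucc i).succ = q i.succ
      rw [Fin.succ_castSucc, Fin.snoc_castSucc]
    show A _ * _ = _
    rw [hinit]
    congr 2
    have hl : (Fin.snoc q q' : Fin (k+2) → Fin Qn) (Fin.last k).succ = q' := by
      rw [Fin.succ_last, Fin.snoc_last]
    exact hl
  rw [hm, h0, ← Matrix.mulVec_mulVec]

lemma base_word (q : Fin Qn) (e : Fin m → ℝ) : B q *ᵥ e ∈ wordSet A B := by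
  refine ⟨0, fun _ => q, e, ?_⟩
  simp [wordProd]

lemma mapA_wordSpan (q' : Fin Qn) {w : Fin n → ℝ}
    (hw : w ∈ Submodule.span ℝ (wordSet A B)) :
    A q' *ᵥ w ∈ Submodule.span ℝ (wordSet A B) := by
  have h : Submodule.span ℝ (wordSet A B) ≤
      (Submodule.span ℝ (wordSet A B)).comap (A q').mulVecLin := by
    rw [Submodule.span_le]
    rintro z ⟨k, q, e, rfl⟩
    refine Submodule.subset_span ⟨k+1, Fin.snoc q q', e, ?_⟩
    simpa using word_snoc A B k q q' e
  simpa using h hw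

lemma reach_subset_wordSpan (P : Set (Fin Qn → ℝ)) :
    reachSet A B P ⊆ ↑(Submodule.span ℝ (wordSet A B)) := by
  rintro z ⟨t, ht, u, p, x, hp, hx0, hxs, rfl⟩
  clear ht
  induction t with
  | zero => simp [hx0]
  | succ s ih =>
    rw [hxs s]
    exact Submodule.sum_mem _ fun q _ => Submodule.smul_mem _ _
      (Submodule.add_mem _ (mapA_wordSpan A B q ih)
        (Submodule.subset_span (base_word A B q (u s))))

/-- The linear map `c ↦ ∑ q, c q • w q`. -/
def combo (w : Fin Qn → Fin n → ℝ) : (Fin Qn → ℝ) →ₗ[ℝ] (Fin n → ℝ) where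
  toFun c := ∑ q, c q • w q
  map_add' a b := by simp [add_smul, Finset.sum_add_distrib]
  map_smul' r a := by simp [Finset.smul_sum, smul_smul]

lemma combo_single (w : Fin Qn → Fin n → ℝ) (q : Fin Qn) :
    combo w (Pi.single q 1) = w q := by
  simp [combo, Pi.single_apply, ite_smul]

variable {P : Set (Fin Qn → ℝ)}

lemma linear_into (hP : Submodule.span ℝ P = ⊤) (f : (Fin Qn → ℝ) →ₗ[ℝ] (Fin n → ℝ))
    (h : ∀ p ∈ P, f p ∈ Submodule.span ℝ (reachSet A B P)) (v : Fin Qn → ℝ) :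
    f v ∈ Submodule.span ℝ (reachSet A B P) := by
  have hle : Submodule.span ℝ P ≤ (Submodule.span ℝ (reachSet A B P)).comap f :=
    Submodule.span_le.mpr h
  rw [hP] at hle
  exact hle Submodule.mem_top

lemma B_mem_V (hP : Submodule.span ℝ P = ⊤) (q : Fin Qn) (e : Fin m → ℝ) :
    B q *ᵥ e ∈ Submodule.span ℝ (reachSet A B P) := by
  have key : ∀ pp ∈ P, (combo fun q => B q *ᵥ e) pp ∈ Submodule.span ℝ (reachSet A B P) := by
    intro pp hpp
    apply Submodule.subset_span
    have := traj_mem A B P (fun _ => e) (fun _ => pp) (fun _ => hpp) (le_refl 1)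
    simpa [traj, combo, Matrix.mulVec_zero] using this
  have h := linear_into A B hP _ key (Pi.single q 1)
  rwa [combo_single] at h

lemma A_reach_mem_V (hP : Submodule.span ℝ P = ⊤) (q : Fin Qn) {v : Fin n → ℝ}
    (hv : v ∈ reachSet A B P) :
    A q *ᵥ v ∈ Submodule.span ℝ (reachSet A B P) := by
  obtain ⟨t, ht, u, p, x, hp, hx0, hxs, rfl⟩ := hv
  have key : ∀ pp ∈ P, (combo fun q => A q *ᵥ x t) pp ∈ Submodule.span ℝ (reachSet A B P) := by
    intro pp hpp
    apply Submodule.subset_span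
    set u' : ℕ → Fin m → ℝ := fun s => if s < t then u s else 0 with hu'
    set p' : ℕ → Fin Qn → ℝ := fun s => if s < t then p s else pp with hp'
    have hagree : ∀ s, s ≤ t → traj A B u' p' s = x s := by
      intro s hs
      induction s with
      | zero => simp [traj, hx0]
      | succ s ih =>
        have hst : s < t := hs
        have hih := ih (le_of_lt hst)
        show (∑ q : Fin Qn, p' s q • (A q *ᵥ traj A B u' p' s + B q *ᵥ u' s)) = x (s+1)
        rw [hxs s, hih]
        simp [hu', hp', hst]
    have hmem := traj_mem A B P u' p'
      (fun s => by by_cases hs : s < t <;> simp [hp', hs, hp s, hpp]) (t := t+1) (by omega)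
    have hval : traj A B u' p' (t+1) = ∑ q : Fin Qn, pp q • (A q *ᵥ x t) := by
      show (∑ q : Fin Qn, p' t q • (A q *ᵥ traj A B u' p' t + B q *ᵥ u' t)) = _
      rw [hagree t le_rfl]
      simp [hu', hp', Matrix.mulVec_zero]
    rw [hval] at hmem
    simpa [combo] using hmem
  have h := linear_into A B hP _ key (Pi.single q 1)
  rwa [combo_single] at h

lemma A_V_mem_V (hP : Submodule.span ℝ P = ⊤) (q : Fin Qn) {v : Fin n → ℝ}
    (hv : v ∈ Submodule.span ℝ (reachSet A B P)) :
    A q *ᵥ v ∈ Submodule.span ℝ (reachSet A B P) := by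
  have h : Submodule.span ℝ (reachSet A B P) ≤
      (Submodule.span ℝ (reachSet A B P)).comap (A q).mulVecLin := by
    rw [Submodule.span_le]
    intro z hz
    simpa using A_reach_mem_V A B hP q hz
  simpa using h hv

lemma word_mem_V (hP : Submodule.span ℝ P = ⊤) : ∀ (k : ℕ) (r : Fin k → Fin Qn) (q0 : Fin Qn) (e : Fin m → ℝ),
    wordProd A r *ᵥ (B q0 *ᵥ e) ∈ Submodule.span ℝ (reachSet A B P) := by
  intro k
  induction k with
  | zero =>
    intro r q0 e
    have : wordProd A r = 1 := rfl
    rw [this, Matrix.one_mulVec]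
    exact B_mem_V A B hP q0 e
  | succ k ih =>
    intro r q0 e
    have : wordProd A r = A (r (Fin.last k)) * wordProd A (Fin.init r) := rfl
    rw [this, ← Matrix.mulVec_mulVec]
    exact A_V_mem_V A B hP _ (ih (Fin.init r) q0 e)

lemma span_reach_eq_span_word (hP : Submodule.span ℝ P = ⊤) :
    Submodule.span ℝ (reachSet A B P) = Submodule.span ℝ (wordSet A B) := by
  apply le_antisymm
  · exact Submodule.span_le.mpr (reach_subset_wordSpan A B P)
  · rw [Submodule.span_le]
    rintro z ⟨k, q, e, rfl⟩
    exact word_mem_V A B hP k _ (q 0) e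

end Aux

/-- If the scheduling set `P` spans `ℝ^Q`, the linear span of the states reachable from `0`
with scheduling values in `P` equals the span of the states reachable with scheduling
values in the standard basis `{e_1,…,e_Q}`, and both equal the span of the vectors
`A_{q_k}⋯A_{q_1} B_{q_0} e`. -/
theorem stmt13 {Qn n m : ℕ}
    (A : Fin Qn → Matrix (Fin n) (Fin n) ℝ)
    (B : Fin Qn → Matrix (Fin n) (Fin m) ℝ)
    (P : Set (Fin Qn → ℝ)) (hP : Submodule.span ℝ P = ⊤) :
    Submodule.span ℝ (reachSet A B P) =
      Submodule.span ℝ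
        (reachSet A B (Set.range fun q : Fin Qn => (Pi.single q 1 : Fin Qn → ℝ))) ∧
    Submodule.span ℝ (reachSet A B P) =
      Submodule.span ℝ {z : Fin n → ℝ | ∃ (k : ℕ) (q : Fin (k+1) → Fin Qn)
        (e : Fin m → ℝ), z = wordProd A (fun i : Fin k => q i.succ) *ᵥ (B (q 0) *ᵥ e)} := by
  have hB : Submodule.span ℝ
      (Set.range fun q : Fin Qn => (Pi.single q 1 : Fin Qn → ℝ)) = ⊤ := by
    have h := Module.Basis.span_eq (Pi.basisFun ℝ (Fin Qn))
    have hr : Set.range (Pi.basisFun ℝ (Fin Qn))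
        = Set.range fun q : Fin Qn => (Pi.single q 1 : Fin Qn → ℝ) := by
      ext z
      simp [Pi.basisFun_apply]
    rwa [hr] at h
  constructor
  · rw [span_reach_eq_span_word A B hP, span_reach_eq_span_word A B hB]
  · exact span_reach_eq_span_word A B hP
end

section
/- Let S : {words over {1,…,Q} of length ≥ 2} → ℝ^{1×m} and for a word sequence p̄ = p_1⋯p_k of vectors in ℝ^Q define f^{p̄} as the function assigning to each finite input/scheduling sequence the corresponding convolution value shifted by the suffix (p_1,0)⋯(p_k,0). Then the map Φ sending f^{p̄} to the vector of row combinations H_v = ∑_{|s| = k} [p̄^{s1}, …, p̄^{sQ}] M(vs) (where p̄^s = ∏_i (p_i)_{s_i} and M is the Hankel block built from S) extends to a well-defined injective linear map from span{f^{p̄} : p̄} into the row space of the Hankel matrix of S; hence span{f^{p̄}} is finite-dimensional if and only if the Hankel matrix has finite rank. -/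
open Matrix

/-- The shifted input-output map `f^{p̄}`: feed the input/scheduling word `w`, then the
scheduling values `p̄ = p_1 ⋯ p_k` with zero input. -/
def shiftMap {Qn m : ℕ} (f : List ((Fin Qn → ℝ) × (Fin m → ℝ)) → ℝ)
    (pb : List (Fin Qn → ℝ)) : List ((Fin Qn → ℝ) × (Fin m → ℝ)) → ℝ :=
  fun w => f (w ++ pb.map fun p => (p, (0 : Fin m → ℝ)))

/-- Rows of the Hankel matrix of `S` (single-output case): the row indexed by the word
`w` and letter `i` has, at column `(v, j, c)`, the entry `S(j · v · w · i)_c`. -/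
def hankelRowOf {Qn m : ℕ} (S : List (Fin Qn) → Fin m → ℝ)
    (ri : List (Fin Qn) × Fin Qn) (ci : List (Fin Qn) × Fin Qn × Fin m) : ℝ :=
  S (ci.2.1 :: (ci.1 ++ ri.1 ++ [ri.2])) ci.2.2

/-- The row combination `H_v = ∑_{|s| = |p̄|} p̄^s S(j · v · s)` associated with `f^{p̄}`. -/
def hankelComb {Qn m : ℕ} (S : List (Fin Qn) → Fin m → ℝ)
    (pb : List (Fin Qn → ℝ)) : (List (Fin Qn) × Fin Qn × Fin m) → ℝ :=
  fun ci => ∑ s : Fin pb.length → Fin Qn,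
    (∏ i : Fin pb.length, pb.get i (s i)) * S (ci.2.1 :: (ci.1 ++ List.ofFn s)) ci.2.2




section Helpers

variable {Qn m : ℕ}

lemma sum_fin_arrow_cast {X M : Type*} [Fintype X] [AddCommMonoid M] {α β : ℕ} (h : α = β)
    (F : (Fin α → X) → M) :
    ∑ q : Fin α → X, F q = ∑ q : Fin β → X, F (q ∘ Fin.cast h) := by
  subst h; rfl

lemma prod_fin_cast {M : Type*} [CommMonoid M] {α β : ℕ} (h : α = β) (F : Fin α → M) :
    ∏ i : Fin α, F i = ∏ i : Fin β, F (Fin.cast h.symm i) := by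
  subst h; rfl

lemma ofFn_comp_cast {X : Type*} {α β : ℕ} (h : α = β) (q : Fin β → X) :
    List.ofFn (q ∘ Fin.cast h) = List.ofFn q := by
  subst h; rfl

lemma delta_sum {a : ℕ} (u : Fin a → Fin Qn) (F : (Fin a → Fin Qn) → ℝ) :
    ∑ s : Fin a → Fin Qn, (∏ i, Pi.single (M := fun _ => ℝ) (u i) 1 (s i)) * F s = F u := by
  rw [Fintype.sum_eq_single u]
  · simp
  · intro b hb
    obtain ⟨i, hi⟩ := Function.ne_iff.mp hb
    rw [Finset.prod_eq_zero (Finset.mem_univ i) (Pi.single_eq_of_ne (M := fun _ => ℝ) hi 1), zero_mul]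

lemma collapse_sum {a : ℕ} (j0 : Fin Qn) (c : Fin m) (u : Fin a → Fin Qn)
    (h : Fin Qn → (Fin a → Fin Qn) → Fin m → ℝ) :
    ∑ j0' : Fin Qn, ∑ v'' : Fin a → Fin Qn, ∑ c' : Fin m,
      Pi.single (M := fun _ => ℝ) j0 1 j0' * (∏ i, Pi.single (M := fun _ => ℝ) (u i) 1 (v'' i)) *
        (Pi.single (M := fun _ => ℝ) c 1 c' * h j0' v'' c') = h j0 u c := by
  rw [Fintype.sum_eq_single j0]
  · rw [Fintype.sum_eq_single u]
    · rw [Fintype.sum_eq_single c]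
      · simp
      · intro b hb; simp [Pi.single_eq_of_ne hb]
    · intro b hb
      obtain ⟨i, hi⟩ := Function.ne_iff.mp hb
      have : (∏ i, Pi.single (M := fun _ => ℝ) (u i) 1 (b i)) = 0 :=
        Finset.prod_eq_zero (Finset.mem_univ i) (Pi.single_eq_of_ne (M := fun _ => ℝ) hi 1)
      simp [this]
  · intro b hb; simp [Pi.single_eq_of_ne hb]

/-- Evaluation-based linear map recovering the Hankel combination from `f^{p̄}`. -/
def psiLM (Qn m : ℕ) : (List ((Fin Qn → ℝ) × (Fin m → ℝ)) → ℝ) →ₗ[ℝ]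
    ((List (Fin Qn) × Fin Qn × Fin m) → ℝ) where
  toFun g := fun ci => g ((Pi.single ci.2.1 1, Pi.single ci.2.2 1)
    :: ci.1.map (fun a => (Pi.single a (1:ℝ), (0 : Fin m → ℝ))))
  map_add' _ _ := rfl
  map_smul' _ _ := rfl

/-- The convolution-based linear map recovering `f^{p̄}` from the Hankel combination. -/
noncomputable def thetaLM (Qn m : ℕ) : ((List (Fin Qn) × Fin Qn × Fin m) → ℝ) →ₗ[ℝ]
    (List ((Fin Qn → ℝ) × (Fin m → ℝ)) → ℝ) where
  toFun h := fun w => ∑ t ∈ Finset.range w.length, ∑ j0 : Fin Qn,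
    ∑ v' : Fin (w.length - 1 - t) → Fin Qn, ∑ c : Fin m,
      (w.getD t default).1 j0 *
        (∏ i : Fin (w.length - 1 - t), (w.getD (t + 1 + (i : ℕ)) default).1 (v' i)) *
        ((w.getD t default).2 c * h (List.ofFn v', j0, c))
  map_add' g h := by
    funext w
    simp only [Pi.add_apply, mul_add, Finset.sum_add_distrib]
  map_smul' r g := by
    funext w
    simp only [Pi.smul_apply, smul_eq_mul, RingHom.id_apply, Finset.mul_sum]
    exact Finset.sum_congr rfl fun t _ => Finset.sum_congr rfl fun j0 _ =>
      Finset.sum_congr rfl fun v' _ => Finset.sum_congr rfl fun c _ => by ring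

end Helpers

section Main

variable {Qn m : ℕ}

lemma prod_comp_cast {M : Type*} [CommMonoid M] {α β : ℕ} (h : α = β) (B : Fin β → M) :
    ∏ i : Fin α, B (Fin.cast h i) = ∏ i : Fin β, B i := by
  subst h; rfl

lemma idx_lt1 {X : Type*} (w : List X) (j : {x // x ∈ Finset.range (w.length - 1)})
    (i : Fin ((j : ℕ) + 2)) : w.length - 2 - (j : ℕ) + (i : ℕ) < w.length := by
  have h1 := Finset.mem_range.mp j.2; have h2 := i.isLt; omega

lemma idx_lt2 {X : Type*} (w : List X) (j : {x // x ∈ Finset.range (w.length - 1)}) :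
    w.length - 2 - (j : ℕ) < w.length := by
  have h1 := Finset.mem_range.mp j.2; omega

lemma main_eq (S : List (Fin Qn) → Fin m → ℝ)
    (f : List ((Fin Qn → ℝ) × (Fin m → ℝ)) → ℝ)
    (hf : ∀ w : List ((Fin Qn → ℝ) × (Fin m → ℝ)),
      f w = ∑ j ∈ (Finset.range (w.length - 1)).attach,
        ∑ q : Fin ((j : ℕ) + 2) → Fin Qn,
          (∏ i : Fin ((j : ℕ) + 2),
            (w.get ⟨w.length - 2 - (j : ℕ) + (i : ℕ), idx_lt1 w j i⟩).1 (q i)) *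
          ∑ c : Fin m, S (List.ofFn q) c *
            (w.get ⟨w.length - 2 - (j : ℕ), idx_lt2 w j⟩).2 c)
    (pb : List (Fin Qn → ℝ)) (hpb : pb ≠ []) (w : List ((Fin Qn → ℝ) × (Fin m → ℝ))) :
    shiftMap f pb w = thetaLM Qn m (hankelComb S pb) w := by
  have hk : 1 ≤ pb.length := List.length_pos_iff.mpr hpb
  simp only [shiftMap]
  set W := w ++ pb.map (fun p => (p, (0 : Fin m → ℝ))) with hW
  have hlen : W.length = w.length + pb.length := by simp [hW]
  set G : ℕ → ℝ := fun j =>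
    ∑ q : Fin (j + 2) → Fin Qn,
      (∏ i : Fin (j + 2), (W.getD (W.length - 2 - j + (i : ℕ)) default).1 (q i)) *
      ∑ c : Fin m, S (List.ofFn q) c * (W.getD (W.length - 2 - j) default).2 c
    with hG
  -- Step A : f W as a sum over `range` with proof-free summand
  have hA : f W = ∑ j ∈ Finset.range (W.length - 1), G j := by
    rw [hf, ← Finset.sum_attach (Finset.range (W.length - 1)) G]
    refine Finset.sum_congr rfl fun j _ => ?_
    have hj := Finset.mem_range.mp j.2
    refine Finset.sum_congr rfl fun q _ => ?_
    congr 1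
    · refine Finset.prod_congr rfl fun i _ => ?_
      have h2 := i.isLt
      rw [List.get_eq_getElem, List.getD_eq_getElem _ _ (by omega)]
    · refine Finset.sum_congr rfl fun c _ => ?_
      rw [List.get_eq_getElem, List.getD_eq_getElem _ _ (by omega)]
  -- Step B : terms with the input inside the `pb` part vanish
  have hzero : ∀ j ∈ Finset.range (W.length - 1), j < pb.length - 1 → G j = 0 := by
    intro j hj hjk
    have hj' := Finset.mem_range.mp hj
    have h2a : W.getD (W.length - 2 - j) default
        = (pb.map (fun p => (p, (0 : Fin m → ℝ)))).getD (W.length - 2 - j - w.length) default :=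
      List.getD_append_right _ _ _ _ (by omega)
    have h2b : (pb.map (fun p => (p, (0 : Fin m → ℝ)))).getD (W.length - 2 - j - w.length) default
        = (pb.map (fun p => (p, (0 : Fin m → ℝ))))[W.length - 2 - j - w.length]'(by
            simp only [List.length_map]; omega) :=
      List.getD_eq_getElem _ _ (by simp only [List.length_map]; omega)
    have h2 : (W.getD (W.length - 2 - j) default).2 = 0 := by
      rw [h2a, h2b]
      simp
    simp only [hG, h2, Pi.zero_apply, mul_zero, Finset.sum_const_zero]
  have hB : ∑ j ∈ Finset.range (W.length - 1), G j
      = ∑ t ∈ Finset.range w.length, G (W.length - 2 - t) := by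
    rw [← Finset.sum_filter_of_ne (p := fun j => pb.length - 1 ≤ j)
      (fun j hj hne => by by_contra hc; exact hne (hzero j hj (by omega)))]
    refine Finset.sum_nbij' (fun j => W.length - 2 - j) (fun t => W.length - 2 - t)
      ?_ ?_ ?_ ?_ ?_
    · intro j hj
      simp only [Finset.mem_filter, Finset.mem_range] at hj ⊢
      omega
    · intro t ht
      simp only [Finset.mem_filter, Finset.mem_range] at ht ⊢
      omega
    · intro j hj
      simp only [Finset.mem_filter, Finset.mem_range] at hj
      omega
    · intro t ht
      simp only [Finset.mem_range] at ht
      omega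
    · intro j hj
      simp only [Finset.mem_filter, Finset.mem_range] at hj
      congr 1
      omega
  -- Step C : the summand for each `t < w.length`
  have hC : ∀ t ∈ Finset.range w.length, G (W.length - 2 - t)
      = ∑ j0 : Fin Qn, ∑ v' : Fin (w.length - 1 - t) → Fin Qn, ∑ c : Fin m,
          (w.getD t default).1 j0 *
            (∏ i : Fin (w.length - 1 - t), (w.getD (t + 1 + (i : ℕ)) default).1 (v' i)) *
            ((w.getD t default).2 c * hankelComb S pb (List.ofFn v', j0, c)) := by
    intro t htm
    have ht := Finset.mem_range.mp htm
    have hj2 : W.length - 2 - (W.length - 2 - t) = t := by omega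
    have hcast : (W.length - 2 - t) + 2 = ((w.length - 1 - t) + pb.length) + 1 := by omega
    have hgets : W.getD t default = w.getD t default := List.getD_append _ _ _ _ ht
    have hbij : Function.Bijective
        (fun x : Fin Qn × ((Fin (w.length - 1 - t) → Fin Qn) × (Fin pb.length → Fin Qn)) =>
          fun i : Fin ((W.length - 2 - t) + 2) =>
            Fin.cons (α := fun _ => Fin Qn) x.1 (Fin.append x.2.1 x.2.2) (Fin.cast hcast i)) :=
      (((Equiv.refl (Fin Qn)).prodCongr
          (Fin.appendEquiv (w.length - 1 - t) pb.length)).trans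
          ((Fin.consEquiv (fun _ : Fin ((w.length - 1 - t) + pb.length + 1) => Fin Qn)).trans
            (Equiv.arrowCongr (finCongr hcast.symm) (Equiv.refl (Fin Qn))))).bijective
    have hpt : ∀ x : Fin Qn × ((Fin (w.length - 1 - t) → Fin Qn) × (Fin pb.length → Fin Qn)),
        (((w.getD t default).1 x.1 *
            (∏ i : Fin (w.length - 1 - t), (w.getD (t + 1 + (i : ℕ)) default).1 (x.2.1 i)) *
            (∏ i : Fin pb.length, pb.get i (x.2.2 i))) *
          ∑ c : Fin m, S (x.1 :: (List.ofFn x.2.1 ++ List.ofFn x.2.2)) c * (w.getD t default).2 c)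
        = (∏ i : Fin ((W.length - 2 - t) + 2), (W.getD (t + (i : ℕ)) default).1
              ((fun i => Fin.cons (α := fun _ => Fin Qn) x.1 (Fin.append x.2.1 x.2.2)
                (Fin.cast hcast i)) i)) *
          ∑ c : Fin m, S (List.ofFn ((fun i => Fin.cons (α := fun _ => Fin Qn) x.1
              (Fin.append x.2.1 x.2.2) (Fin.cast hcast i)))) c * (W.getD t default).2 c := by
      rintro ⟨j0, v', s⟩
      have hofn : List.ofFn (fun i => Fin.cons (α := fun _ => Fin Qn) j0
            (Fin.append v' s) (Fin.cast hcast i))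
          = j0 :: (List.ofFn v' ++ List.ofFn s) := by
        rw [show (fun i => Fin.cons (α := fun _ => Fin Qn) j0 (Fin.append v' s)
            (Fin.cast hcast i)) = (Fin.cons j0 (Fin.append v' s)) ∘ Fin.cast hcast from rfl,
          ofFn_comp_cast, List.ofFn_succ]
        simp
      have hprod : (∏ i : Fin ((W.length - 2 - t) + 2),
            (W.getD (t + (i : ℕ)) default).1
              (Fin.cons (α := fun _ => Fin Qn) j0 (Fin.append v' s) (Fin.cast hcast i)))
          = (w.getD t default).1 j0 *
            ((∏ i : Fin (w.length - 1 - t), (w.getD (t + 1 + (i : ℕ)) default).1 (v' i)) *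
             (∏ i : Fin pb.length, pb.get i (s i))) := by
        have hstep : (∏ i : Fin ((W.length - 2 - t) + 2),
              (W.getD (t + (i : ℕ)) default).1
                (Fin.cons (α := fun _ => Fin Qn) j0 (Fin.append v' s) (Fin.cast hcast i)))
            = ∏ i : Fin (((w.length - 1 - t) + pb.length) + 1),
              (W.getD (t + (i : ℕ)) default).1
                (Fin.cons (α := fun _ => Fin Qn) j0 (Fin.append v' s) i) :=
          prod_comp_cast hcast (fun i => (W.getD (t + (i : ℕ)) default).1
            (Fin.cons (α := fun _ => Fin Qn) j0 (Fin.append v' s) i))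
        rw [hstep]
        rw [Fin.prod_univ_succ]
        congr 1
        · simp only [Fin.cons_zero, Fin.val_zero, add_zero, hgets]
        · rw [Fin.prod_univ_add]
          congr 1
          · refine Finset.prod_congr rfl fun i _ => ?_
            have hi := i.isLt
            rw [Fin.cons_succ, Fin.append_left]
            have e1 : (((Fin.castAdd pb.length i).succ : Fin _) : ℕ) = (i : ℕ) + 1 := by simp
            rw [e1, show t + ((i : ℕ) + 1) = t + 1 + (i : ℕ) by omega]
            have e2 : W.getD (t + 1 + (i : ℕ)) default = w.getD (t + 1 + (i : ℕ)) default :=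
              List.getD_append _ _ _ _ (by omega)
            rw [e2]
          · refine Finset.prod_congr rfl fun i _ => ?_
            have hi := i.isLt
            rw [Fin.cons_succ, Fin.append_right]
            have e1 : (((Fin.natAdd (w.length - 1 - t) i).succ : Fin _) : ℕ)
                = (w.length - 1 - t) + (i : ℕ) + 1 := by simp
            rw [e1, show t + ((w.length - 1 - t) + (i : ℕ) + 1) = w.length + (i : ℕ) by omega]
            have e2 : W.getD (w.length + (i : ℕ)) default
                = (pb.map (fun p => (p, (0 : Fin m → ℝ)))).getD
                    (w.length + (i : ℕ) - w.length) default :=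
              List.getD_append_right _ _ _ _ (by omega)
            have e3 : w.length + (i : ℕ) - w.length = (i : ℕ) := by omega
            have e4 : (pb.map (fun p => (p, (0 : Fin m → ℝ)))).getD (i : ℕ) default
                = (pb.map (fun p => (p, (0 : Fin m → ℝ))))[(i : ℕ)]'(by
                    simp only [List.length_map]; omega) :=
              List.getD_eq_getElem _ _ (by simp only [List.length_map]; omega)
            rw [e2, e3, e4]
            simp
      dsimp only
      rw [hofn, hprod, hgets]
      ring
    have h1 : G (W.length - 2 - t)
        = ∑ j0 : Fin Qn, ∑ v' : Fin (w.length - 1 - t) → Fin Qn,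
            ∑ s : Fin pb.length → Fin Qn,
            ((w.getD t default).1 j0 *
              (∏ i : Fin (w.length - 1 - t), (w.getD (t + 1 + (i : ℕ)) default).1 (v' i)) *
              (∏ i : Fin pb.length, pb.get i (s i))) *
            ∑ c : Fin m, S (j0 :: (List.ofFn v' ++ List.ofFn s)) c * (w.getD t default).2 c := by
      simp only [hG, hj2]
      refine ((Fintype.sum_bijective _ hbij _ _ hpt).symm).trans ?_
      rw [Fintype.sum_prod_type]
      refine Finset.sum_congr rfl fun j0 _ => ?_
      rw [Fintype.sum_prod_type]
    rw [h1]
    refine Finset.sum_congr rfl fun j0 _ => Finset.sum_congr rfl fun v' _ => ?_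
    simp only [hankelComb, Finset.mul_sum]
    rw [Finset.sum_comm]
    refine Finset.sum_congr rfl fun s _ => Finset.sum_congr rfl fun c _ => by ring
  -- assemble
  show f W = _
  rw [hA, hB, Finset.sum_congr rfl hC]
  rfl

end Main

section Rest

variable {Qn m : ℕ}

lemma psi_eq (S : List (Fin Qn) → Fin m → ℝ)
    (f : List ((Fin Qn → ℝ) × (Fin m → ℝ)) → ℝ)
    (hf : ∀ w : List ((Fin Qn → ℝ) × (Fin m → ℝ)),
      f w = ∑ j ∈ (Finset.range (w.length - 1)).attach,
        ∑ q : Fin ((j : ℕ) + 2) → Fin Qn,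
          (∏ i : Fin ((j : ℕ) + 2),
            (w.get ⟨w.length - 2 - (j : ℕ) + (i : ℕ), idx_lt1 w j i⟩).1 (q i)) *
          ∑ c : Fin m, S (List.ofFn q) c *
            (w.get ⟨w.length - 2 - (j : ℕ), idx_lt2 w j⟩).2 c)
    (pb : List (Fin Qn → ℝ)) (hpb : pb ≠ []) :
    psiLM Qn m (shiftMap f pb) = hankelComb S pb := by
  funext ci
  obtain ⟨v, j0, c⟩ := ci
  show shiftMap f pb ((Pi.single j0 1, Pi.single c 1)
      :: v.map (fun a => (Pi.single a (1:ℝ), (0 : Fin m → ℝ)))) = _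
  rw [main_eq S f hf pb hpb]
  set w0 := (Pi.single j0 (1:ℝ), Pi.single c (1:ℝ))
      :: v.map (fun a => (Pi.single a (1:ℝ), (0 : Fin m → ℝ))) with hw0
  have hlen : w0.length = v.length + 1 := by simp [hw0]
  show (∑ t ∈ Finset.range w0.length, ∑ j0' : Fin Qn,
    ∑ v'' : Fin (w0.length - 1 - t) → Fin Qn, ∑ c' : Fin m,
      (w0.getD t default).1 j0' *
        (∏ i : Fin (w0.length - 1 - t), (w0.getD (t + 1 + (i : ℕ)) default).1 (v'' i)) *
        ((w0.getD t default).2 c' * hankelComb S pb (List.ofFn v'', j0', c'))) = _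
  rw [hlen]
  rw [Finset.sum_range_succ']
  have hzero : ∀ t ∈ Finset.range v.length, (∑ j0' : Fin Qn,
      ∑ v'' : Fin (v.length + 1 - 1 - (t + 1)) → Fin Qn, ∑ c' : Fin m,
        (w0.getD (t + 1) default).1 j0' *
          (∏ i : Fin (v.length + 1 - 1 - (t + 1)), (w0.getD (t + 1 + 1 + (i : ℕ)) default).1 (v'' i)) *
          ((w0.getD (t + 1) default).2 c' * hankelComb S pb (List.ofFn v'', j0', c'))) = 0 := by
    intro t htm
    have ht := Finset.mem_range.mp htm
    have h2 : (w0.getD (t + 1) default).2 = 0 := by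
      rw [hw0, List.getD_cons_succ]
      rw [List.getD_eq_getElem _ _ (by simp [ht])]
      simp
    simp only [h2, Pi.zero_apply, zero_mul, mul_zero, Finset.sum_const_zero]
  rw [Finset.sum_congr rfl hzero]
  simp only [Finset.sum_const_zero, zero_add]
  -- the t = 0 term
  have h0 : (w0.getD 0 default) = (Pi.single j0 (1:ℝ), Pi.single c (1:ℝ)) := by
    rw [hw0]; rfl
  have hsub : v.length + 1 - 1 - 0 = v.length := by omega
  rw [hsub]
  have hB : ∀ i : Fin v.length,
      (w0.getD (0 + 1 + (i : ℕ)) default).1 = Pi.single (v.get i) 1 := by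
    intro i
    rw [hw0, show (0 + 1 + (i : ℕ)) = (i : ℕ) + 1 by omega, List.getD_cons_succ]
    rw [List.getD_eq_getElem _ _ (by simp [i.isLt])]
    simp
  simp only [h0, hB]
  rw [collapse_sum j0 c (fun i => v.get i)
    (fun j0' v'' c' => hankelComb S pb (List.ofFn v'', j0', c'))]
  rw [show List.ofFn (fun i => v.get i) = v from List.ofFn_get v]

lemma theta_eq (S : List (Fin Qn) → Fin m → ℝ)
    (f : List ((Fin Qn → ℝ) × (Fin m → ℝ)) → ℝ)
    (hf : ∀ w : List ((Fin Qn → ℝ) × (Fin m → ℝ)),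
      f w = ∑ j ∈ (Finset.range (w.length - 1)).attach,
        ∑ q : Fin ((j : ℕ) + 2) → Fin Qn,
          (∏ i : Fin ((j : ℕ) + 2),
            (w.get ⟨w.length - 2 - (j : ℕ) + (i : ℕ), idx_lt1 w j i⟩).1 (q i)) *
          ∑ c : Fin m, S (List.ofFn q) c *
            (w.get ⟨w.length - 2 - (j : ℕ), idx_lt2 w j⟩).2 c)
    (pb : List (Fin Qn → ℝ)) (hpb : pb ≠ []) :
    thetaLM Qn m (hankelComb S pb) = shiftMap f pb :=
  funext fun w => (main_eq S f hf pb hpb w).symm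

lemma row_mem (S : List (Fin Qn) → Fin m → ℝ) (pb : List (Fin Qn → ℝ)) (hpb : pb ≠ []) :
    hankelComb S pb ∈ Submodule.span ℝ (Set.range fun ri => hankelRowOf S ri) := by
  have hk0 : (pb.length ≠ 0) := (List.length_pos_iff.mpr hpb).ne'
  have hne : ∀ s : Fin pb.length → Fin Qn, List.ofFn s ≠ [] := by
    intro s; simpa using hk0
  have hx : hankelComb S pb = ∑ s : Fin pb.length → Fin Qn,
      (∏ i, pb.get i (s i)) •
        hankelRowOf S ((List.ofFn s).dropLast, (List.ofFn s).getLast (hne s)) := by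
    funext ci
    rw [Finset.sum_apply]
    refine Finset.sum_congr rfl fun s _ => ?_
    rw [Pi.smul_apply, smul_eq_mul]
    congr 2
    show ci.2.1 :: (ci.1 ++ List.ofFn s) = ci.2.1 :: (ci.1 ++ (List.ofFn s).dropLast ++ [(List.ofFn s).getLast (hne s)])
    rw [List.append_assoc, List.dropLast_append_getLast (hne s)]
  rw [hx]
  exact Submodule.sum_mem _ fun s _ =>
    Submodule.smul_mem _ _ (Submodule.subset_span ⟨_, rfl⟩)

lemma row_img (S : List (Fin Qn) → Fin m → ℝ) (ri : List (Fin Qn) × Fin Qn) :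
    hankelRowOf S ri = hankelComb S ((ri.1 ++ [ri.2]).map fun a => Pi.single a 1) := by
  funext ci
  simp only [hankelComb]
  have hlm : (((ri.1 ++ [ri.2]).map (fun a => Pi.single (M := fun _ => ℝ) a 1)).length)
      = (ri.1 ++ [ri.2]).length := List.length_map _
  have hget : ∀ (i : Fin (((ri.1 ++ [ri.2]).map (fun a => Pi.single (M := fun _ => ℝ) a 1)).length)),
      ((ri.1 ++ [ri.2]).map (fun a => Pi.single (M := fun _ => ℝ) a 1)).get i
        = Pi.single ((ri.1 ++ [ri.2]).get (Fin.cast hlm i)) 1 := by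
    intro i
    simp only [List.get_eq_getElem, List.getElem_map, Fin.coe_cast]
  simp only [hget]
  rw [delta_sum (fun i => (ri.1 ++ [ri.2]).get (Fin.cast hlm i))
    (fun s => S (ci.2.1 :: (ci.1 ++ List.ofFn s)) ci.2.2)]
  have hofn : List.ofFn (fun i => (ri.1 ++ [ri.2]).get (Fin.cast hlm i)) = ri.1 ++ [ri.2] := by
    rw [show (fun i => (ri.1 ++ [ri.2]).get (Fin.cast hlm i))
        = (ri.1 ++ [ri.2]).get ∘ Fin.cast hlm from rfl, ofFn_comp_cast, List.ofFn_get]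
  rw [hofn]
  simp only [hankelRowOf]
  rw [List.append_assoc]

end Rest

/-- The map `Φ : f^{p̄} ↦ H_{p̄}` extends to a well-defined injective linear map from
`span{f^{p̄}}` into the row space of the Hankel matrix of `S`; hence `span{f^{p̄}}` is
finite-dimensional iff the Hankel matrix has finite rank. Here `f` is the input-output
map given by the generalized convolution representation with coefficients `S`. -/
theorem stmt17 {Qn m : ℕ} (S : List (Fin Qn) → Fin m → ℝ)
    (f : List ((Fin Qn → ℝ) × (Fin m → ℝ)) → ℝ)
    (hf : ∀ w : List ((Fin Qn → ℝ) × (Fin m → ℝ)),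
      f w = ∑ j ∈ (Finset.range (w.length - 1)).attach,
        ∑ q : Fin ((j : ℕ) + 2) → Fin Qn,
          (∏ i : Fin ((j : ℕ) + 2),
            (w.get ⟨w.length - 2 - (j : ℕ) + (i : ℕ), by
              have h1 := Finset.mem_range.mp j.2; have h2 := i.isLt; omega⟩).1 (q i)) *
          ∑ c : Fin m, S (List.ofFn q) c *
            (w.get ⟨w.length - 2 - (j : ℕ), by
              have h1 := Finset.mem_range.mp j.2; omega⟩).2 c) :
    ∃ Φ : ↥(Submodule.span ℝ
        {g : List ((Fin Qn → ℝ) × (Fin m → ℝ)) → ℝ |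
          ∃ pb : List (Fin Qn → ℝ), pb ≠ [] ∧ g = shiftMap f pb}) →ₗ[ℝ]
        ((List (Fin Qn) × Fin Qn × Fin m) → ℝ),
      Function.Injective Φ ∧
      (∀ v, (Φ v : (List (Fin Qn) × Fin Qn × Fin m) → ℝ) ∈
        Submodule.span ℝ (Set.range fun ri => hankelRowOf S ri)) ∧
      (∀ (pb : List (Fin Qn → ℝ)) (hpb : pb ≠ [])
        (hmem : shiftMap f pb ∈ Submodule.span ℝ
          {g : List ((Fin Qn → ℝ) × (Fin m → ℝ)) → ℝ |
            ∃ pb' : List (Fin Qn → ℝ), pb' ≠ [] ∧ g = shiftMap f pb'}),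
        Φ ⟨shiftMap f pb, hmem⟩ = hankelComb S pb) ∧
      (FiniteDimensional ℝ ↥(Submodule.span ℝ
          {g : List ((Fin Qn → ℝ) × (Fin m → ℝ)) → ℝ |
            ∃ pb : List (Fin Qn → ℝ), pb ≠ [] ∧ g = shiftMap f pb}) ↔
        FiniteDimensional ℝ ↥(Submodule.span ℝ (Set.range fun ri => hankelRowOf S ri))) := by
  classical
  set gens : Set (List ((Fin Qn → ℝ) × (Fin m → ℝ)) → ℝ) :=
    {g | ∃ pb : List (Fin Qn → ℝ), pb ≠ [] ∧ g = shiftMap f pb} with hgens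
  set V : Submodule ℝ (List ((Fin Qn → ℝ) × (Fin m → ℝ)) → ℝ) := Submodule.span ℝ gens with hV
  set R : Submodule ℝ ((List (Fin Qn) × Fin Qn × Fin m) → ℝ) :=
    Submodule.span ℝ (Set.range fun ri => hankelRowOf S ri) with hR
  have hpsi : ∀ (pb : List (Fin Qn → ℝ)), pb ≠ [] →
      psiLM Qn m (shiftMap f pb) = hankelComb S pb := fun pb hpb => psi_eq S f hf pb hpb
  -- Φ maps V into R
  have hVR : V ≤ R.comap (psiLM Qn m) := by
    rw [hV]
    apply Submodule.span_le.mpr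
    rintro g ⟨pb, hpb, rfl⟩
    simp only [SetLike.mem_coe, Submodule.mem_comap, hpsi pb hpb]
    exact row_mem S pb hpb
  -- θ∘ψ is the identity on V
  have hTP : ∀ x ∈ V, thetaLM Qn m (psiLM Qn m x) = x := by
    intro x hx
    have heq : Set.EqOn ((thetaLM Qn m).comp (psiLM Qn m)) (LinearMap.id (R := ℝ)) gens := by
      rintro g ⟨pb, hpb, rfl⟩
      show thetaLM Qn m (psiLM Qn m (shiftMap f pb)) = shiftMap f pb
      rw [hpsi pb hpb, theta_eq S f hf pb hpb]
    have := LinearMap.eqOn_span heq hx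
    simpa using this
  have hinj : Function.Injective ((psiLM Qn m).domRestrict V) := by
    intro x y hxy
    apply Subtype.ext
    have hx := hTP x.1 x.2
    have hy := hTP y.1 y.2
    rw [← hx, ← hy]
    simp only [LinearMap.domRestrict_apply] at hxy
    rw [hxy]
  have hmap : Submodule.map (psiLM Qn m) V = R := by
    apply le_antisymm
    · rw [hV, Submodule.map_span]
      apply Submodule.span_le.mpr
      rintro y ⟨g, ⟨pb, hpb, rfl⟩, rfl⟩
      rw [hpsi pb hpb]
      exact row_mem S pb hpb
    · rw [hR]
      apply Submodule.span_le.mpr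
      rintro y ⟨ri, rfl⟩
      have hpbri : ((ri.1 ++ [ri.2]).map fun a => Pi.single a (1:ℝ)) ≠ [] := by simp
      refine ⟨shiftMap f ((ri.1 ++ [ri.2]).map fun a => Pi.single a 1), ?_, ?_⟩
      · exact Submodule.subset_span ⟨_, hpbri, rfl⟩
      · rw [hpsi _ hpbri, ← row_img]
  refine ⟨(psiLM Qn m).domRestrict V, hinj, ?_, ?_, ?_⟩
  · intro v
    exact hVR v.2
  · intro pb hpb hmem
    simp only [LinearMap.domRestrict_apply]
    exact hpsi pb hpb
  · have e1 := LinearEquiv.ofInjective ((psiLM Qn m).domRestrict V) hinj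
    have e2 : (↥(LinearMap.range ((psiLM Qn m).domRestrict V))) ≃ₗ[ℝ] ↥R :=
      LinearEquiv.ofEq _ _ (by rw [LinearMap.range_domRestrict, hmap])
    constructor
    · intro h
      exact Module.Finite.equiv (e1.trans e2)
    · intro h
      exact Module.Finite.equiv (e1.trans e2).symm
end

section
/- Let f^{p̄} (for p̄ a finite nonempty sequence of vectors in ℝ^Q) be functions on a set X satisfying the shift property f^{p_1⋯p_{r+i}}(w) = f^{p_{r+1}⋯p_{r+i}}(σ_{p_1⋯p_r} w) for a family of maps σ on X, and suppose there exist polynomials Q_0,…,Q_n on (ℝ^Q)^{n+1} with Q_0 not identically zero such that ∑_{j=0}^n Q_j(p_1,…,p_{n+1}) f^{p_1⋯p_{n+1-j}} = 0 for all p_1,…,p_{n+1} ∈ ℝ^Q. Assume additionally each f^{p_1⋯p_k} is multilinear in p_1,…,p_k. Then span{ f^{p̄} : p̄ } = span{ f^{p̄} : |p̄| ≤ n }, which is finite-dimensional. -/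
private lemma stmt19_exists_eval_ne {N Q : ℕ} {P : MvPolynomial (Fin N × Fin Q) ℝ} (h : P ≠ 0) :
    ∃ p : Fin N → Fin Q → ℝ, MvPolynomial.eval (fun iq => p iq.1 iq.2) P ≠ 0 := by
  by_contra hc
  push_neg at hc
  apply h
  apply MvPolynomial.funext
  intro x
  rw [map_zero]
  exact hc fun i q => x (i, q)

private lemma stmt19_ofFn_update {α : Type*} {m : ℕ} (p : Fin m → α) (k : Fin m) (x : α) :
    List.ofFn (Function.update p k x) =
      (List.ofFn p).take (k : ℕ) ++ x :: (List.ofFn p).drop ((k : ℕ) + 1) := by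
  rw [← List.set_eq_take_cons_drop x (by simp)]
  apply List.ext_getElem
  · simp
  · intro i h1 h2
    simp only [List.getElem_ofFn, List.getElem_set]
    rw [Function.update_apply]
    by_cases h : (k : ℕ) = i
    · simp [h, Fin.ext_iff]
    · simp [h, Fin.ext_iff, Ne.symm h]

/-- Suppose the functions `f^{p̄} = F p̄` on a set `X` (for nonempty finite sequences `p̄`
of vectors in `ℝ^Q`) satisfy the shift property `F (a ++ b) w = F b (σ a w)`, are
multilinear in the entries of `p̄`, and satisfy a polynomial recurrence
`∑_{j=0}^n Q_j(p_1,…,p_{n+1}) f^{p_1⋯p_{n+1-j}} = 0` with `Q_0 ≠ 0`. Then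
`span{f^{p̄}} = span{f^{p̄} : |p̄| ≤ n}`, which is finite-dimensional. -/
theorem stmt19 {Qn n : ℕ} {X : Type*}
    (σ : List (Fin Qn → ℝ) → X → X)
    (F : List (Fin Qn → ℝ) → (X → ℝ))
    (hshift : ∀ (a b : List (Fin Qn → ℝ)), b ≠ [] →
      F (a ++ b) = fun w => F b (σ a w))
    (hmul : ∀ (l1 l2 : List (Fin Qn → ℝ)) (c : ℝ) (p p' : Fin Qn → ℝ),
      F (l1 ++ (c • p + p') :: l2) = c • F (l1 ++ p :: l2) + F (l1 ++ p' :: l2))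
    (Qp : Fin (n+1) → MvPolynomial (Fin (n+1) × Fin Qn) ℝ)
    (hQ0 : Qp 0 ≠ 0)
    (hann : ∀ p : Fin (n+1) → (Fin Qn → ℝ),
      ∑ j : Fin (n+1),
        MvPolynomial.eval (fun iq => p iq.1 iq.2) (Qp j) •
          F (List.ofFn fun i : Fin (n + 1 - (j : ℕ)) =>
            p (Fin.castLE (Nat.sub_le (n+1) (j : ℕ)) i)) = 0) :
    Submodule.span ℝ {g : X → ℝ | ∃ pb : List (Fin Qn → ℝ), pb ≠ [] ∧ g = F pb} =
      Submodule.span ℝ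
        {g : X → ℝ | ∃ pb : List (Fin Qn → ℝ), pb ≠ [] ∧ pb.length ≤ n ∧ g = F pb} ∧
    FiniteDimensional ℝ
      ↥(Submodule.span ℝ {g : X → ℝ | ∃ pb : List (Fin Qn → ℝ), pb ≠ [] ∧ g = F pb}) := by
  classical
  set S : Set (X → ℝ) :=
    {g : X → ℝ | ∃ pb : List (Fin Qn → ℝ), pb ≠ [] ∧ pb.length ≤ n ∧ g = F pb} with hSdef
  set W : Submodule ℝ (X → ℝ) := Submodule.span ℝ S with hWdef
  -- consequences of multilinearity
  have hzero : ∀ l1 l2 : List (Fin Qn → ℝ), F (l1 ++ (0 : Fin Qn → ℝ) :: l2) = 0 := by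
    intro l1 l2
    have h := hmul l1 l2 1 0 0
    simp only [one_smul, add_zero] at h
    exact left_eq_add.mp h
  have hadd : ∀ (l1 l2 : List (Fin Qn → ℝ)) (x y : Fin Qn → ℝ),
      F (l1 ++ (x + y) :: l2) = F (l1 ++ x :: l2) + F (l1 ++ y :: l2) := by
    intro l1 l2 x y
    have h := hmul l1 l2 1 x y
    simpa only [one_smul] using h
  have hsmul : ∀ (l1 l2 : List (Fin Qn → ℝ)) (c : ℝ) (x : Fin Qn → ℝ),
      F (l1 ++ (c • x) :: l2) = c • F (l1 ++ x :: l2) := by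
    intro l1 l2 c x
    have h := hmul l1 l2 c x 0
    rwa [add_zero, hzero, add_zero] at h
  have hsum : ∀ (l1 l2 : List (Fin Qn → ℝ)) (s : Finset (Fin Qn)) (g : Fin Qn → Fin Qn → ℝ),
      F (l1 ++ (∑ q ∈ s, g q) :: l2) = ∑ q ∈ s, F (l1 ++ g q :: l2) := by
    intro l1 l2 s g
    induction s using Finset.induction with
    | empty => simpa using hzero l1 l2
    | insert _ _ hq ih => rw [Finset.sum_insert hq, Finset.sum_insert hq, hadd, ih]
  have hexpand : ∀ (l1 l2 : List (Fin Qn → ℝ)) (x : Fin Qn → ℝ),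
      F (l1 ++ x :: l2) = ∑ q : Fin Qn, x q • F (l1 ++ (Pi.single q (1:ℝ)) :: l2) := by
    intro l1 l2 x
    have hx : x = ∑ q : Fin Qn, x q • (Pi.single q 1 : Fin Qn → ℝ) := by
      funext j
      rw [Finset.sum_apply]
      simp [Pi.single_apply]
    conv_lhs => rw [hx]
    rw [hsum]
    exact Finset.sum_congr rfl fun q _ => hsmul l1 l2 (x q) (Pi.single q 1)
  -- finite-dimensionality via a finite spanning set
  set T : Set (X → ℝ) := ⋃ k : Fin (n+1),
    Set.range (fun b : Fin (k:ℕ) → Fin Qn =>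
      F (List.ofFn fun i => Pi.single (b i) (1:ℝ))) with hTdef
  have hTfin : T.Finite := Set.finite_iUnion fun k => Set.finite_range _
  have hexp : ∀ l2 : List (Fin Qn → ℝ), ∀ b1 : List (Fin Qn),
      b1.length + l2.length ≤ n →
      F ((b1.map fun q => Pi.single q (1:ℝ)) ++ l2) ∈ Submodule.span ℝ T := by
    intro l2
    induction l2 with
    | nil =>
      intro b1 hlen
      apply Submodule.subset_span
      apply Set.mem_iUnion.mpr
      refine ⟨⟨b1.length, by omega⟩, ⟨fun i => b1.get i, ?_⟩⟩
      show F (List.ofFn fun i : Fin b1.length => Pi.single (b1.get i) (1:ℝ)) = _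
      rw [List.append_nil]
      refine congrArg F ?_
      apply List.ext_getElem
      · simp
      · intro i h1 h2
        simp
    | cons x l2 ih =>
      intro b1 hlen
      rw [hexpand]
      apply Submodule.sum_mem
      intro q _
      apply Submodule.smul_mem
      have h2 : (b1.map fun q => Pi.single q (1:ℝ)) ++ (Pi.single q (1:ℝ)) :: l2
          = ((b1 ++ [q]).map fun q => Pi.single q (1:ℝ)) ++ l2 := by
        simp
      rw [h2]
      apply ih
      have hlen' : b1.length + (l2.length + 1) ≤ n := by simpa using hlen
      simp only [List.length_append, List.length_singleton]
      omega
  have hWT : W ≤ Submodule.span ℝ T := by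
    rw [hWdef]
    apply Submodule.span_le.mpr
    rintro g ⟨pb, hne, hlen, rfl⟩
    have := hexp pb [] (by simpa using hlen)
    simpa using this
  have hTfd : FiniteDimensional ℝ (Submodule.span ℝ T) :=
    FiniteDimensional.span_of_finite ℝ hTfin
  have hWfin : FiniteDimensional ℝ W := Submodule.finiteDimensional_of_le hWT
  -- the quotient argument
  have hlist0 : ∀ p : Fin (n+1) → Fin Qn → ℝ,
      (List.ofFn fun i : Fin (n + 1 - ((0 : Fin (n+1)) : ℕ)) =>
        p (Fin.castLE (Nat.sub_le (n+1) ((0 : Fin (n+1)) : ℕ)) i)) = List.ofFn p := by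
    intro p
    apply List.ext_getElem
    · simp
    · intro i h1 h2
      simp only [List.getElem_ofFn]
      exact congrArg p (Fin.ext rfl)
  have claimU : ∀ p : Fin (n+1) → Fin Qn → ℝ,
      MvPolynomial.eval (fun iq => p iq.1 iq.2) (Qp 0) ≠ 0 →
      W.mkQ (F (List.ofFn p)) = 0 := by
    intro p hp
    have h2 := congrArg W.mkQ (hann p)
    rw [map_sum, map_zero] at h2
    simp only [map_smul] at h2
    rw [Fin.sum_univ_succ] at h2
    have htail : ∀ i : Fin n,
        MvPolynomial.eval (fun iq => p iq.1 iq.2) (Qp i.succ) •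
          W.mkQ (F (List.ofFn fun j : Fin (n + 1 - ((i.succ : Fin (n+1)) : ℕ)) =>
            p (Fin.castLE (Nat.sub_le (n+1) ((i.succ : Fin (n+1)) : ℕ)) j))) = 0 := by
      intro i
      have hi := i.isLt
      have hmem0 : F (List.ofFn fun j : Fin (n + 1 - ((i.succ : Fin (n+1)) : ℕ)) =>
          p (Fin.castLE (Nat.sub_le (n+1) ((i.succ : Fin (n+1)) : ℕ)) j)) ∈ W := by
        apply Submodule.subset_span
        refine ⟨_, ?_, ?_, rfl⟩
        · rw [Ne, List.ofFn_eq_nil_iff]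
          simp only [Fin.val_succ]
          omega
        · simp only [List.length_ofFn, Fin.val_succ]
          omega
      rw [Submodule.mkQ_apply, (Submodule.Quotient.mk_eq_zero W).mpr hmem0, smul_zero]
    rw [Finset.sum_eq_zero (fun i _ => htail i), add_zero, hlist0 p] at h2
    exact (smul_eq_zero.mp h2).resolve_left hp
  have hGlin : ∀ (p : Fin (n+1) → Fin Qn → ℝ) (k : Fin (n+1)) (c : ℝ) (x y : Fin Qn → ℝ),
      W.mkQ (F (List.ofFn (Function.update p k (c • x + y)))) =
        c • W.mkQ (F (List.ofFn (Function.update p k x))) +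
          W.mkQ (F (List.ofFn (Function.update p k y))) := by
    intro p k c x y
    rw [stmt19_ofFn_update, stmt19_ofFn_update, stmt19_ofFn_update, hmul, map_add, map_smul]
  have aux : ∀ d : ℕ, ∀ p : Fin (n+1) → Fin Qn → ℝ,
      (∃ p' : Fin (n+1) → Fin Qn → ℝ,
        (∀ i : Fin (n+1), (i : ℕ) < n + 1 - d → p' i = p i) ∧
        MvPolynomial.eval (fun iq => p' iq.1 iq.2) (Qp 0) ≠ 0) →
      W.mkQ (F (List.ofFn p)) = 0 := by
    intro d
    induction d with
    | zero =>
      rintro p ⟨p', hag, hp'⟩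
      have hpp : p' = p := funext fun i => hag i (by omega)
      rw [hpp] at hp'
      exact claimU p hp'
    | succ d IH =>
      rintro p ⟨p', hag, hp'⟩
      by_cases hd : n + 1 ≤ d
      · exact IH p ⟨p', fun i hi => hag i (by omega), hp'⟩
      push_neg at hd
      set K : Fin (n+1) := ⟨n - d, by omega⟩ with hK
      set Pt : Polynomial ℝ := MvPolynomial.eval₂ Polynomial.C
        (fun iq : Fin (n+1) × Fin Qn => Polynomial.C (p' iq.1 iq.2) +
          if iq.1 = K then Polynomial.X * Polynomial.C (p K iq.2) else 0) (Qp 0) with hPtdef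
      have hPt : ∀ t : ℝ, Polynomial.eval t Pt =
          MvPolynomial.eval
            (fun iq => Function.update p' K (p' K + t • p K) iq.1 iq.2) (Qp 0) := by
        intro t
        have hc := MvPolynomial.eval₂_comp_left (Polynomial.evalRingHom t) Polynomial.C
          (fun iq : Fin (n+1) × Fin Qn => Polynomial.C (p' iq.1 iq.2) +
            if iq.1 = K then Polynomial.X * Polynomial.C (p K iq.2) else 0) (Qp 0)
        have hid : (Polynomial.evalRingHom t).comp Polynomial.C = RingHom.id ℝ := by
          ext x; simp
        rw [hid] at hc
        rw [← hPtdef] at hc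
        simp only [Polynomial.coe_evalRingHom] at hc
        have hfeq : (Polynomial.eval t ∘ fun iq : Fin (n+1) × Fin Qn =>
            Polynomial.C (p' iq.1 iq.2) +
              if iq.1 = K then Polynomial.X * Polynomial.C (p K iq.2) else 0) =
            (fun iq : Fin (n+1) × Fin Qn =>
              Function.update p' K (p' K + t • p K) iq.1 iq.2) := by
          funext iq
          by_cases hik : iq.1 = K
          · rw [Function.comp_apply, if_pos hik, hik, Function.update_self]
            simp only [Polynomial.eval_add, Polynomial.eval_mul, Polynomial.eval_C,
              Polynomial.eval_X, Pi.add_apply, Pi.smul_apply, smul_eq_mul]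
          · rw [Function.comp_apply, if_neg hik, add_zero, Polynomial.eval_C,
              Function.update_of_ne hik]
        rw [hc, MvPolynomial.eval₂_id, hfeq]
      have hPt0 : Pt ≠ 0 := by
        intro h0
        apply hp'
        have h1 := hPt 0
        rw [h0] at h1
        simp only [Polynomial.eval_zero, zero_smul, add_zero,
          Function.update_eq_self] at h1
        exact h1.symm
      have hinf : {t : ℝ | Polynomial.eval t Pt ≠ 0}.Infinite := by
        have hfin := Polynomial.finite_setOf_isRoot hPt0
        have h2 := hfin.infinite_compl
        have h3 : {t : ℝ | Polynomial.eval t Pt ≠ 0} = {x : ℝ | Pt.IsRoot x}ᶜ := by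
          ext t
          simp [Polynomial.IsRoot]
        rw [h3]
        exact h2
      obtain ⟨t₁, ht₁, t₂, ht₂, htne⟩ := hinf.nontrivial
      have hzt : ∀ t : ℝ, Polynomial.eval t Pt ≠ 0 →
          W.mkQ (F (List.ofFn (Function.update p K (p' K + t • p K)))) = 0 := by
        intro t ht
        apply IH
        refine ⟨Function.update p' K (p' K + t • p K), ?_, ?_⟩
        · intro i hi
          by_cases hik : i = K
          · subst hik
            rw [Function.update_self, Function.update_self]
          · have hiv : (i : ℕ) ≠ n - d := fun hc => hik (Fin.ext (by simp [hK, hc]))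
            rw [Function.update_of_ne hik, Function.update_of_ne hik]
            exact hag i (by omega)
        · rw [← hPt t]
          exact ht
      have hline : ∀ t : ℝ,
          W.mkQ (F (List.ofFn (Function.update p K (p' K + t • p K)))) =
            t • W.mkQ (F (List.ofFn p)) +
              W.mkQ (F (List.ofFn (Function.update p K (p' K)))) := by
        intro t
        rw [add_comm (p' K) (t • p K), hGlin p K t (p K) (p' K), Function.update_eq_self]
      have e1 := hzt t₁ ht₁
      have e2 := hzt t₂ ht₂
      rw [hline] at e1 e2
      have e3 : t₁ • W.mkQ (F (List.ofFn p)) = t₂ • W.mkQ (F (List.ofFn p)) :=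
        add_right_cancel (e1.trans e2.symm)
      have e4 : (t₁ - t₂) • W.mkQ (F (List.ofFn p)) = 0 := by
        rw [sub_smul, e3, sub_self]
      exact (smul_eq_zero.mp e4).resolve_left (sub_ne_zero.mpr htne)
  have main1 : ∀ p : Fin (n+1) → Fin Qn → ℝ, W.mkQ (F (List.ofFn p)) = 0 := by
    obtain ⟨p0, hp0⟩ := stmt19_exists_eval_ne hQ0
    intro p
    exact aux (n+1) p ⟨p0, fun i hi => absurd hi (by omega), hp0⟩
  have hW1 : ∀ pb : List (Fin Qn → ℝ), pb.length = n + 1 → F pb ∈ W := by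
    intro pb hl
    have hp : pb = List.ofFn (fun i : Fin (n+1) => pb.get (Fin.cast hl.symm i)) := by
      apply List.ext_getElem
      · simp [hl]
      · intro i h1 h2
        simp only [List.getElem_ofFn, List.get_eq_getElem, Fin.coe_cast]
    have h := main1 (fun i => pb.get (Fin.cast hl.symm i))
    rw [← hp] at h
    rwa [Submodule.mkQ_apply, Submodule.Quotient.mk_eq_zero] at h
  have hmem : ∀ m (pb : List (Fin Qn → ℝ)), pb.length = m → pb ≠ [] → F pb ∈ W := by
    intro m
    induction m using Nat.strong_induction_on with
    | _ m IH =>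
      intro pb hlen hne
      rcases le_or_gt m n with h | h
      · exact Submodule.subset_span ⟨pb, hne, by omega, rfl⟩
      rcases eq_or_lt_of_le (Nat.succ_le_of_lt h) with h2 | h2
      · exact hW1 pb (by omega)
      · set r := m - (n+1) with hr
        have hr1 : 1 ≤ r := by omega
        have hsplit := List.take_append_drop r pb
        set a := pb.take r with ha
        set b := pb.drop r with hb
        have hal : a.length = r := by
          rw [ha, List.length_take]
          omega
        have hbl : b.length = n + 1 := by
          rw [hb, List.length_drop]
          omega
        have hbne : b ≠ [] := by
          intro hnil
          rw [hnil] at hbl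
          simp at hbl
        have hFb : F b ∈ W := hW1 b hbl
        have hTW : (LinearMap.funLeft ℝ ℝ (σ a)) (F b) ∈ W := by
          have hmap : Submodule.map (LinearMap.funLeft ℝ ℝ (σ a)) W ≤ W := by
            rw [hWdef, Submodule.map_span, Submodule.span_le]
            rintro g ⟨g', ⟨c, hcne, hclen, rfl⟩, rfl⟩
            have hfl : (LinearMap.funLeft ℝ ℝ (σ a)) (F c) = F (a ++ c) := by
              rw [hshift a c hcne]
              rfl
            rw [hfl]
            refine IH (a.length + c.length) (by omega) (a ++ c) (by simp) ?_
            simp [hcne]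
          exact hmap (Submodule.mem_map_of_mem hFb)
        have hfin : F pb = (LinearMap.funLeft ℝ ℝ (σ a)) (F b) := by
          conv_lhs => rw [← hsplit]
          rw [hshift a b hbne]
          rfl
        rwa [hfin]
  have hle1 : Submodule.span ℝ {g : X → ℝ | ∃ pb : List (Fin Qn → ℝ), pb ≠ [] ∧ g = F pb}
      ≤ W := by
    apply Submodule.span_le.mpr
    rintro g ⟨pb, hne, rfl⟩
    exact hmem pb.length pb rfl hne
  have heq : Submodule.span ℝ {g : X → ℝ | ∃ pb : List (Fin Qn → ℝ), pb ≠ [] ∧ g = F pb}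
      = W := by
    refine le_antisymm hle1 ?_
    rw [hWdef]
    apply Submodule.span_mono
    rintro g ⟨pb, h1, h2, h3⟩
    exact ⟨pb, h1, h3⟩
  refine ⟨heq, ?_⟩
  rw [heq]
  exact hWfin
end
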